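/- Let P be a finite set of points in R^d, F a j-dimensional flat containing a point o, and u ∈ R^d with projection Proj(u) onto F distinct from o. For an integer τ ≥ 1, define u_p = |<p - o, (Proj(u)-o)/||Proj(u)-o||>|, h^τ = (1/|P|)·Σ_p u_p^τ, and δ = ((1/|P|)·Σ_p dist(p,F)^τ)^{1/τ}. If F' is the rotation of F induced by u - o with angle θ satisfying tan θ ≤ Δ/h for some Δ > 0 (L_τ sense Δ-rotation), then ((1/|P|)·Σ_{p∈P} dist(p,F')^τ)^{1/τ} ≤ δ + Δ. -/

import Mathlib

open Finset Metric
open scoped RealInnerProductSpace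

lemma aux_norm_le_tan {d : ℕ} (x y : EuclideanSpace ℝ (Fin d)) (hxy : 0 < ⟪x, y⟫) :
    ‖‖y‖⁻¹ • y - ‖x‖⁻¹ • x‖ ≤ Real.tan (InnerProductGeometry.angle x y) := by
  have hx : x ≠ 0 := by rintro rfl; simp at hxy
  have hy : y ≠ 0 := by rintro rfl; simp at hxy
  have hnx : 0 < ‖x‖ := norm_pos_iff.mpr hx
  have hny : 0 < ‖y‖ := norm_pos_iff.mpr hy
  set θ := InnerProductGeometry.angle x y with hθ
  have hco : 0 < Real.cos θ := by
    rw [hθ, InnerProductGeometry.cos_angle]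
    exact div_pos hxy (mul_pos hnx hny)
  have hco1 : Real.cos θ ≤ 1 := Real.cos_le_one θ
  have hsi : 0 ≤ Real.sin θ :=
    Real.sin_nonneg_of_nonneg_of_le_pi (InnerProductGeometry.angle_nonneg x y)
      (InnerProductGeometry.angle_le_pi x y)
  have hpyth := Real.sin_sq_add_cos_sq θ
  have hinner : ⟪(‖y‖⁻¹ • y : EuclideanSpace ℝ (Fin d)), ‖x‖⁻¹ • x⟫ = Real.cos θ := by
    rw [real_inner_smul_left, real_inner_smul_right, real_inner_comm]
    have := InnerProductGeometry.cos_angle_mul_norm_mul_norm x y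
    rw [← hθ] at this
    rw [← this]
    field_simp
  have hc2 : ‖‖y‖⁻¹ • y - ‖x‖⁻¹ • x‖ ^ 2 = 2 - 2 * Real.cos θ := by
    rw [norm_sub_sq_real, hinner]
    rw [norm_smul, norm_smul, norm_inv, norm_norm, norm_inv, norm_norm,
      inv_mul_cancel₀ hny.ne', inv_mul_cancel₀ hnx.ne']
    ring
  set c := ‖‖y‖⁻¹ • y - ‖x‖⁻¹ • x‖ with hc
  have hcnn : 0 ≤ c := norm_nonneg _
  rw [Real.tan_eq_sin_div_cos, le_div_iff₀ hco]
  have h1 : (c * Real.cos θ) ^ 2 ≤ Real.sin θ ^ 2 := by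
    nlinarith [sq_nonneg (1 - Real.cos θ), mul_nonneg (sq_nonneg (1 - Real.cos θ)) hco.le]
  nlinarith [mul_nonneg hcnn hco.le]

section auxsec

variable {d : ℕ}

local notation "E" => EuclideanSpace ℝ (Fin d)

lemma aux_perpoint_dist (F : AffineSubspace ℝ (EuclideanSpace ℝ (Fin d)))
    (o : EuclideanSpace ℝ (Fin d)) (ho : o ∈ F)
    (pu : EuclideanSpace ℝ (Fin d)) (hpu : pu ∈ F) (hne : pu - o ≠ 0)
    (u : EuclideanSpace ℝ (Fin d)) (huo : u - o ≠ 0)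
    (F' : AffineSubspace ℝ (EuclideanSpace ℝ (Fin d)))
    (hF' : F' = AffineSubspace.mk' o
      (Submodule.span ℝ {u - o} ⊔ (F.direction ⊓ (Submodule.span ℝ {pu - o})ᗮ)))
    (p : EuclideanSpace ℝ (Fin d)) :
    infDist p (F' : Set (EuclideanSpace ℝ (Fin d)))
      ≤ infDist p (F : Set (EuclideanSpace ℝ (Fin d)))
        + |⟪p - o, ‖pu - o‖⁻¹ • (pu - o)⟫|
          * ‖‖pu - o‖⁻¹ • (pu - o) - ‖u - o‖⁻¹ • (u - o)‖ := by
  set D := F.direction with hD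
  set w : E := ‖pu - o‖⁻¹ • (pu - o) with hwdef
  set w' : E := ‖u - o‖⁻¹ • (u - o) with hw'def
  have hnpu : ‖pu - o‖ ≠ 0 := norm_ne_zero_iff.mpr hne
  have hwD : w ∈ D := D.smul_mem _ (by
    have := AffineSubspace.vsub_mem_direction hpu ho
    rwa [vsub_eq_sub] at this)
  have hww : ⟪w, w⟫ = 1 := by
    rw [real_inner_self_eq_norm_sq, hwdef, norm_smul, norm_inv, norm_norm,
      inv_mul_cancel₀ hnpu, one_pow]
  set v : E := p - o with hvdef
  set Pv : E := (Submodule.orthogonalProjectionOnto D v : E) with hPv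
  have hPvD : Pv ∈ D := (Submodule.orthogonalProjectionOnto D v).2
  have horth : ∀ z ∈ D, ⟪v - Pv, z⟫ = 0 := fun z hz =>
    Submodule.starProjection_inner_eq_zero (K := D) v z hz
  set t : ℝ := ⟪v, w⟫ with htdef
  have htPv : ⟪Pv, w⟫ = t := by
    have h0 := horth w hwD
    rw [inner_sub_left] at h0
    rw [htdef]; linarith
  set g : E := Pv - t • w with hgdef
  have hgD : g ∈ D := D.sub_mem hPvD (D.smul_mem _ hwD)
  have hwg : ⟪w, g⟫ = 0 := by
    rw [hgdef, inner_sub_right, real_inner_smul_right, real_inner_comm Pv w, htPv, hww]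
    ring
  have hgO : g ∈ (Submodule.span ℝ {pu - o})ᗮ := by
    rw [Submodule.mem_orthogonal]
    intro x hx
    obtain ⟨a, rfl⟩ := Submodule.mem_span_singleton.mp hx
    have hpuw : pu - o = ‖pu - o‖ • w := by
      rw [hwdef, smul_smul, mul_inv_cancel₀ hnpu, one_smul]
    rw [hpuw, smul_smul, real_inner_smul_left, hwg, mul_zero]
  -- the point q' in F'
  have hq'mem : (t • w' + g) +ᵥ o ∈ F' := by
    rw [hF']
    refine AffineSubspace.vadd_mem_of_mem_direction ?_ (AffineSubspace.self_mem_mk' o _)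
    rw [AffineSubspace.direction_mk']
    refine Submodule.add_mem _ (Submodule.mem_sup_left ?_) (Submodule.mem_sup_right ⟨hgD, hgO⟩)
    exact Submodule.smul_mem _ _ (Submodule.smul_mem _ _ (Submodule.mem_span_singleton_self _))
  -- q in F
  have hqmem : Pv +ᵥ o ∈ F := AffineSubspace.vadd_mem_of_mem_direction hPvD ho
  -- dist p q = ‖v - Pv‖ and is ≤ infDist p F
  have hdistq : dist p (Pv +ᵥ o) = ‖v - Pv‖ := by
    rw [dist_eq_norm, hvdef]
    congr 1
    abel_nf
    simp [vadd_eq_add]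
    abel
  have hle : ‖v - Pv‖ ≤ infDist p (F : Set E) := by
    haveI : Nonempty (F : Set E) := ⟨⟨o, ho⟩⟩
    rw [infDist_eq_iInf]
    apply le_ciInf
    rintro ⟨y, hy⟩
    show ‖v - Pv‖ ≤ dist p y
    have hm : y - o ∈ D := by
      have := AffineSubspace.vsub_mem_direction hy ho
      rwa [vsub_eq_sub] at this
    have hdist : dist p y = ‖(v - Pv) + (Pv - (y - o))‖ := by
      rw [dist_eq_norm, hvdef]; congr 1; abel
    have hperp : ⟪v - Pv, Pv - (y - o)⟫ = 0 := horth _ (D.sub_mem hPvD hm)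
    have hsq : ‖(v - Pv) + (Pv - (y - o))‖ ^ 2
        = ‖v - Pv‖ ^ 2 + ‖Pv - (y - o)‖ ^ 2 := by
      rw [norm_add_sq_real, hperp]; ring
    have h1 : ‖v - Pv‖ ^ 2 ≤ dist p y ^ 2 := by
      rw [hdist, hsq]; nlinarith [sq_nonneg ‖Pv - (y - o)‖]
    nlinarith [norm_nonneg (v - Pv), dist_nonneg (x := p) (y := y)]
  calc infDist p (F' : Set E) ≤ dist p ((t • w' + g) +ᵥ o) :=
        infDist_le_dist_of_mem hq'mem
    _ ≤ dist p (Pv +ᵥ o) + dist (Pv +ᵥ o) ((t • w' + g) +ᵥ o) := dist_triangle _ _ _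
    _ ≤ infDist p (F : Set E) + |t| * ‖w - w'‖ := by
        have h2 : dist (Pv +ᵥ o) ((t • w' + g) +ᵥ o) = |t| * ‖w - w'‖ := by
          rw [dist_eq_norm]
          have : (Pv +ᵥ o) - ((t • w' + g) +ᵥ o) = t • (w - w') := by
            simp only [vadd_eq_add, hgdef, smul_sub]
            abel
          rw [this, norm_smul, Real.norm_eq_abs]
        rw [h2, hdistq] at *
        exact add_le_add hle le_rfl

end auxsec



/-- `L_τ` sense Δ-rotation lemma: with `F` a `j`-flat through `o`, `pu` the
orthogonal projection of `u` onto `F` (distinct from `o`),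
`u_p = |⟪p-o,(pu-o)/‖pu-o‖⟫|`, `h = ((1/|P|)Σ u_p^τ)^{1/τ}`, and `F'` the
rotation of `F` induced by `u - o` with angle `θ` satisfying `tan θ ≤ Δ/h`,
one has `((1/|P|)Σ dist(p,F')^τ)^{1/τ} ≤ ((1/|P|)Σ dist(p,F)^τ)^{1/τ} + Δ`. -/
theorem ltau_delta_rotation_lemma (d j : ℕ) (τ : ℕ) (hτ : 1 ≤ τ)
    (P : Finset (EuclideanSpace ℝ (Fin d))) (hP : P.Nonempty)
    (F : AffineSubspace ℝ (EuclideanSpace ℝ (Fin d)))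
    (hFdim : Module.finrank ℝ F.direction = j)
    (o : EuclideanSpace ℝ (Fin d)) (ho : o ∈ F)
    (u pu : EuclideanSpace ℝ (Fin d)) (hpu : pu ∈ F)
    (hproj : ∀ v ∈ F.direction, ⟪u - pu, v⟫ = 0)
    (hne : pu ≠ o)
    (Δ : ℝ) (hΔ : 0 < Δ) (h : ℝ)
    (hh : h = ((∑ p ∈ P, |⟪p - o, ‖pu - o‖⁻¹ • (pu - o)⟫| ^ τ) / P.card) ^ ((1 : ℝ) / τ))
    (hhpos : 0 < h)
    (htan : Real.tan (InnerProductGeometry.angle (u - o) (pu - o)) ≤ Δ / h)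
    (F' : AffineSubspace ℝ (EuclideanSpace ℝ (Fin d)))
    (hF' : F' = AffineSubspace.mk' o
      (Submodule.span ℝ {u - o} ⊔ (F.direction ⊓ (Submodule.span ℝ {pu - o})ᗮ))) :
    ((∑ p ∈ P, infDist p (F' : Set (EuclideanSpace ℝ (Fin d))) ^ τ) / P.card) ^ ((1 : ℝ) / τ)
      ≤ ((∑ p ∈ P, infDist p (F : Set (EuclideanSpace ℝ (Fin d))) ^ τ) / P.card) ^ ((1 : ℝ) / τ)
        + Δ := by
  
  have hpuo : pu - o ≠ 0 := sub_ne_zero.mpr hne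
  have hpuoD : pu - o ∈ F.direction := by
    have := AffineSubspace.vsub_mem_direction hpu ho
    rwa [vsub_eq_sub] at this
  have hinner : ⟪u - o, pu - o⟫ = ‖pu - o‖ ^ 2 := by
    have h1 : u - o = (u - pu) + (pu - o) := by abel
    rw [h1, inner_add_left, hproj _ hpuoD, zero_add, real_inner_self_eq_norm_sq]
  have hpos : (0:ℝ) < ⟪u - o, pu - o⟫ := by
    rw [hinner]
    exact pow_pos (norm_pos_iff.mpr hpuo) 2
  have huo : u - o ≠ 0 := by
    intro h0
    rw [h0, inner_zero_left] at hpos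
    exact lt_irrefl _ hpos
  set w : (EuclideanSpace ℝ (Fin d)) := ‖pu - o‖⁻¹ • (pu - o) with hwdef
  set w' : (EuclideanSpace ℝ (Fin d)) := ‖u - o‖⁻¹ • (u - o) with hw'def
  set c : ℝ := ‖w - w'‖ with hcdef
  have hcnn : 0 ≤ c := norm_nonneg _
  have hctan : c ≤ Real.tan (InnerProductGeometry.angle (u - o) (pu - o)) :=
    aux_norm_le_tan (u - o) (pu - o) hpos
  have hcΔ : c * h ≤ Δ := by
    have h2 : c ≤ Δ / h := le_trans hctan htan
    rw [le_div_iff₀ hhpos] at h2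
    exact h2
  have hpt : ∀ p : (EuclideanSpace ℝ (Fin d)), infDist p (F' : Set (EuclideanSpace ℝ (Fin d)))
      ≤ infDist p (F : Set (EuclideanSpace ℝ (Fin d))) + |⟪p - o, w⟫| * c :=
    fun p => aux_perpoint_dist F o ho pu hpu hpuo u huo F' hF' p
  -- summation
  set n : ℝ := (P.card : ℝ) with hndef
  have hn : 0 < n := by rw [hndef]; exact_mod_cast hP.card_pos
  have hτ0 : ((τ:ℝ)) ≠ 0 := by positivity
  have hτR : (1:ℝ) ≤ (τ:ℝ) := by exact_mod_cast hτ
  set a : (EuclideanSpace ℝ (Fin d)) → ℝ := fun p => infDist p (F : Set (EuclideanSpace ℝ (Fin d))) with hadef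
  set b : (EuclideanSpace ℝ (Fin d)) → ℝ := fun p => |⟪p - o, w⟫| * c with hbdef
  have ha : ∀ p, 0 ≤ a p := fun p => infDist_nonneg
  have hb : ∀ p, 0 ≤ b p := fun p => mul_nonneg (abs_nonneg _) hcnn
  have step1 : ∑ p ∈ P, infDist p (F' : Set (EuclideanSpace ℝ (Fin d))) ^ τ ≤ ∑ p ∈ P, (a p + b p) ^ τ :=
    Finset.sum_le_sum fun p _ => pow_le_pow_left₀ infDist_nonneg (hpt p) τ
  have hAnn : 0 ≤ ∑ p ∈ P, a p ^ τ := Finset.sum_nonneg fun p _ => pow_nonneg (ha p) τ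
  have hBnn : 0 ≤ ∑ p ∈ P, b p ^ τ := Finset.sum_nonneg fun p _ => pow_nonneg (hb p) τ
  have hABnn : 0 ≤ ∑ p ∈ P, (a p + b p) ^ τ :=
    Finset.sum_nonneg fun p _ => pow_nonneg (add_nonneg (ha p) (hb p)) τ
  have hSnn : 0 ≤ ∑ p ∈ P, infDist p (F' : Set (EuclideanSpace ℝ (Fin d))) ^ τ :=
    Finset.sum_nonneg fun p _ => pow_nonneg infDist_nonneg τ
  have hmink : (∑ p ∈ P, (a p + b p) ^ τ) ^ ((1:ℝ)/τ)
      ≤ (∑ p ∈ P, a p ^ τ) ^ ((1:ℝ)/τ) + (∑ p ∈ P, b p ^ τ) ^ ((1:ℝ)/τ) := by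
    have hmk := Real.Lp_add_le P a b hτR
    have e1 : (∑ p ∈ P, |a p + b p| ^ ((τ:ℕ):ℝ)) = ∑ p ∈ P, (a p + b p) ^ τ := by
      refine Finset.sum_congr rfl fun p _ => ?_
      rw [abs_of_nonneg (add_nonneg (ha p) (hb p)), Real.rpow_natCast]
    have e2 : (∑ p ∈ P, |a p| ^ ((τ:ℕ):ℝ)) = ∑ p ∈ P, a p ^ τ := by
      refine Finset.sum_congr rfl fun p _ => ?_
      rw [abs_of_nonneg (ha p), Real.rpow_natCast]
    have e3 : (∑ p ∈ P, |b p| ^ ((τ:ℕ):ℝ)) = ∑ p ∈ P, b p ^ τ := by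
      refine Finset.sum_congr rfl fun p _ => ?_
      rw [abs_of_nonneg (hb p), Real.rpow_natCast]
    rwa [e1, e2, e3] at hmk
  have hbsum : (∑ p ∈ P, b p ^ τ) = (∑ p ∈ P, |⟪p - o, w⟫| ^ τ) * c ^ τ := by
    rw [Finset.sum_mul]
    refine Finset.sum_congr rfl fun p _ => ?_
    rw [hbdef, mul_pow]
  have hxnn : 0 ≤ ∑ p ∈ P, |⟪p - o, w⟫| ^ τ :=
    Finset.sum_nonneg fun p _ => pow_nonneg (abs_nonneg _) τ
  have hbrpow : ((∑ p ∈ P, b p ^ τ) / n) ^ ((1:ℝ)/τ) = c * h := by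
    rw [hbsum, hh, mul_div_right_comm,
      Real.mul_rpow (div_nonneg hxnn hn.le) (pow_nonneg hcnn τ),
      ← Real.rpow_natCast c τ, ← Real.rpow_mul hcnn, mul_one_div_cancel hτ0,
      Real.rpow_one, mul_comm]
  calc ((∑ p ∈ P, infDist p (F' : Set (EuclideanSpace ℝ (Fin d))) ^ τ) / n) ^ ((1:ℝ)/τ)
      ≤ ((∑ p ∈ P, (a p + b p) ^ τ) / n) ^ ((1:ℝ)/τ) := by
        apply Real.rpow_le_rpow (div_nonneg hSnn hn.le) _ (by positivity)
        exact div_le_div_of_nonneg_right step1 hn.le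
    _ = (∑ p ∈ P, (a p + b p) ^ τ) ^ ((1:ℝ)/τ) / n ^ ((1:ℝ)/τ) :=
        Real.div_rpow hABnn hn.le _
    _ ≤ ((∑ p ∈ P, a p ^ τ) ^ ((1:ℝ)/τ) + (∑ p ∈ P, b p ^ τ) ^ ((1:ℝ)/τ)) / n ^ ((1:ℝ)/τ) := by
        exact div_le_div_of_nonneg_right hmink (Real.rpow_pos_of_pos hn _).le
    _ = (∑ p ∈ P, a p ^ τ) ^ ((1:ℝ)/τ) / n ^ ((1:ℝ)/τ)
          + (∑ p ∈ P, b p ^ τ) ^ ((1:ℝ)/τ) / n ^ ((1:ℝ)/τ) := add_div _ _ _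
    _ = ((∑ p ∈ P, a p ^ τ) / n) ^ ((1:ℝ)/τ) + ((∑ p ∈ P, b p ^ τ) / n) ^ ((1:ℝ)/τ) := by
        rw [Real.div_rpow hAnn hn.le, Real.div_rpow hBnn hn.le]
    _ = ((∑ p ∈ P, a p ^ τ) / n) ^ ((1:ℝ)/τ) + c * h := by rw [hbrpow]
    _ ≤ ((∑ p ∈ P, a p ^ τ) / n) ^ ((1:ℝ)/τ) + Δ := by linarith
    _ = ((∑ p ∈ P, infDist p (F : Set (EuclideanSpace ℝ (Fin d))) ^ τ) / n) ^ ((1:ℝ)/τ) + Δ := by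
        simp only [hadef]
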